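/- There exist 48 points p₁, …, p₄₈ in the unit square [0,1]² ⊆ ℝ² such that ‖pᵢ − pⱼ‖ ≥ 0.168 for all i ≠ j. -/

import Mathlib

def packXc (i : ℕ) : ℤ := 2534 * (i / 8) + 1267 * (i % 8 % 2)
def packYc (i : ℕ) : ℤ := 2000 * (i % 8)

noncomputable def packPts : Fin 48 → EuclideanSpace ℝ (Fin 2) :=
  fun i => WithLp.toLp 2 ![(packXc i : ℝ) / 14000, (packYc i : ℝ) / 14000]

lemma packXc_bounds : ∀ i : Fin 48, 0 ≤ packXc i ∧ packXc i ≤ 14000 := by decide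

lemma packYc_bounds : ∀ i : Fin 48, 0 ≤ packYc i ∧ packYc i ≤ 14000 := by decide

lemma pack_key : ∀ i j : Fin 48, i ≠ j →
    (5531904 : ℤ) ≤ (packXc i - packXc j) ^ 2 + (packYc i - packYc j) ^ 2 := by decide

/-- There exist 48 points in the unit square `[0,1]²` with all pairwise
Euclidean distances at least 0.168 (point-spreading form of the improved
packing of 48 equal disks in a square). -/
theorem packing_48_disks :
    ∃ p : Fin 48 → EuclideanSpace ℝ (Fin 2),
      (∀ i, ∀ t : Fin 2, p i t ∈ Set.Icc (0 : ℝ) 1) ∧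
      ∀ i j, i ≠ j → (0.168 : ℝ) ≤ ‖p i - p j‖ := by
  refine ⟨packPts, ?_, ?_⟩
  · intro i t
    have hx := packXc_bounds i
    have hy := packYc_bounds i
    have hx' : (0 : ℝ) ≤ (packXc i : ℝ) ∧ (packXc i : ℝ) ≤ 14000 := by exact_mod_cast hx
    have hy' : (0 : ℝ) ≤ (packYc i : ℝ) ∧ (packYc i : ℝ) ≤ 14000 := by exact_mod_cast hy
    fin_cases t <;>
      simp only [packPts, PiLp.toLp_apply, Fin.mk_zero, Fin.mk_one, Fin.isValue, Matrix.cons_val_zero,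
        Matrix.cons_val_one, Matrix.head_cons, Set.mem_Icc] <;>
      constructor <;>
      [exact div_nonneg hx'.1 (by norm_num); (rw [div_le_one (by norm_num)]; linarith [hx'.2]);
       exact div_nonneg hy'.1 (by norm_num); (rw [div_le_one (by norm_num)]; linarith [hy'.2])]
  · intro i j hij
    have key := pack_key i j hij
    have keyR : (5531904 : ℝ) ≤ ((packXc i : ℝ) - packXc j) ^ 2 +
        ((packYc i : ℝ) - packYc j) ^ 2 := by exact_mod_cast key
    rw [← dist_eq_norm, EuclideanSpace.dist_eq,
      show ((0.168 : ℝ)) = Real.sqrt (0.168 ^ 2) by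
        rw [Real.sqrt_sq (by norm_num)]]
    apply Real.sqrt_le_sqrt
    rw [Fin.sum_univ_two]
    simp only [packPts, PiLp.toLp_apply, Matrix.cons_val_zero, Matrix.cons_val_one, Matrix.head_cons,
      Real.dist_eq, sq_abs]
    nlinarith [keyR]
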